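/- arXiv:1410.0795 — 6 statements merged into one kernel-verified Lean document; each statement's English description precedes it below -/
import Mathlib

section
/- If L = ⊕_{i=1}^r I_i e_i ⊊ F is a squarefree lexicographic submodule and μ_i = max{deg(u e_i) : u e_i in the minimal generating set of I_i e_i}, then μ_i - f_i ≤ indeg(I_{i+1}) + f_{i+1} - f_i for i = 1,...,r-1, and μ_1 ≤ μ_2 ≤ ... ≤ μ_r. -/
open scoped Classical

noncomputable section

/-- The squarefree monomial `∏_{i ∈ A} x_i` of `S = K[x_1,…,x_n]`,
encoded by its support `A ⊆ {1,…,n}`. -/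
def sqMon (K : Type*) [Field K] {n : ℕ} (A : Finset (Fin n)) : MvPolynomial (Fin n) K :=
  ∏ i ∈ A, MvPolynomial.X i

/-- `[x_1,…,x_n]^d`: the ideal generated by all squarefree monomials of degree `d`. -/
def sqPow (K : Type*) [Field K] (n d : ℕ) : Ideal (MvPolynomial (Fin n) K) :=
  Ideal.span {p | ∃ A : Finset (Fin n), A.card = d ∧ p = sqMon K A}

/-- `I` is a squarefree monomial ideal: generated by squarefree monomials. -/
def IsSqMonIdeal (K : Type*) [Field K] {n : ℕ} (I : Ideal (MvPolynomial (Fin n) K)) : Prop :=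
  ∃ G : Set (Finset (Fin n)), I = Ideal.span (sqMon K '' G)

/-- `A` encodes a minimal monomial generator of the squarefree monomial ideal `I`. -/
def IsMinGen (K : Type*) [Field K] {n : ℕ} (I : Ideal (MvPolynomial (Fin n) K))
    (A : Finset (Fin n)) : Prop :=
  sqMon K A ∈ I ∧ ∀ B : Finset (Fin n), B ⊂ A → sqMon K B ∉ I

/-- `m(u)` : the largest index (1-based) occurring in the squarefree monomial with support `A`. -/
def mIdx {n : ℕ} (A : Finset (Fin n)) : ℕ := A.sup (fun i => i.1 + 1)

/-- Squarefree stable ideal: for every minimal generator `u`,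
`x_j u / x_{m(u)} ∈ I` for all `j < m(u)`, `j ∉ supp u`. -/
def IsSqStableIdeal (K : Type*) [Field K] {n : ℕ} (I : Ideal (MvPolynomial (Fin n) K)) : Prop :=
  IsSqMonIdeal K I ∧ ∀ A : Finset (Fin n), IsMinGen K I A →
    ∀ (hA : A.Nonempty) (j : Fin n), j ∉ A → j < A.max' hA →
      sqMon K (insert j (A.erase (A.max' hA))) ∈ I

/-- Squarefree strongly stable ideal: for every minimal generator `u`,
`x_j u / x_i ∈ I` for all `i ∈ supp u` and `j < i`, `j ∉ supp u`. -/
def IsSqStronglyStableIdeal (K : Type*) [Field K] {n : ℕ}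
    (I : Ideal (MvPolynomial (Fin n) K)) : Prop :=
  IsSqMonIdeal K I ∧ ∀ A : Finset (Fin n), IsMinGen K I A →
    ∀ i ∈ A, ∀ j : Fin n, j ∉ A → j < i → sqMon K (insert j (A.erase i)) ∈ I

/-- The squarefree lexicographic order (on supports of equal-degree squarefree monomials):
`A >_slex B` iff at the first index where they differ, `A` has the smaller index. -/
def slexGT {n : ℕ} (A B : Finset (Fin n)) : Prop :=
  ∃ h : (symmDiff A B).Nonempty, (symmDiff A B).min' h ∈ A

/-- Squarefree lexsegment ideal. -/
def IsSqLexIdeal (K : Type*) [Field K] {n : ℕ} (I : Ideal (MvPolynomial (Fin n) K)) : Prop :=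
  IsSqMonIdeal K I ∧ ∀ A B : Finset (Fin n), A.card = B.card →
    sqMon K A ∈ I → slexGT B A → sqMon K B ∈ I

/-- `indeg I`: the least degree of a (squarefree) monomial in `I`. -/
def indeg (K : Type*) [Field K] {n : ℕ} (I : Ideal (MvPolynomial (Fin n) K)) : ℕ :=
  sInf {d : ℕ | ∃ A : Finset (Fin n), A.card = d ∧ sqMon K A ∈ I}

/-- `G(I)_d`: the minimal generators of `I` in degree `d`, as a finset of supports. -/
def mgens (K : Type*) [Field K] {n : ℕ} (I : Ideal (MvPolynomial (Fin n) K)) (d : ℕ) :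
    Finset (Finset (Fin n)) :=
  Finset.univ.filter (fun A => IsMinGen K I A ∧ A.card = d)

/-- Graded Betti numbers `β_{k,k+j}(M)` of `M = ⊕ I_i e_i` (deg `e_i = f i`),
via the Aramova–Herzog–Hibi formula. -/
def betti (K : Type*) [Field K] {n r : ℕ} (I : Fin r → Ideal (MvPolynomial (Fin n) K))
    (f : Fin r → ℕ) (k j : ℕ) : ℕ :=
  ∑ i : Fin r, ∑ A ∈ mgens K (I i) (j - f i), Nat.choose (mIdx A - A.card) k

/-- Graded Betti numbers `β_{k,k+j}(I)` of a squarefree stable ideal (AHH formula). -/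
def bettiI (K : Type*) [Field K] {n : ℕ} (I : Ideal (MvPolynomial (Fin n) K)) (k j : ℕ) : ℕ :=
  ∑ A ∈ mgens K I j, Nat.choose (mIdx A - A.card) k

/-- `β k ℓ` (standing for `β_{k,k+ℓ}`) is an extremal Betti number. -/
def IsExtremal (β : ℕ → ℕ → ℕ) (k ℓ : ℕ) : Prop :=
  β k ℓ ≠ 0 ∧ ∀ i j : ℕ, k ≤ i → ℓ ≤ j → (i, j) ≠ (k, ℓ) → β i j = 0

/-- Squarefree stable submodule `M = ⊕ I_i e_i ⊊ F` (characterization):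
each `I_i` a proper squarefree stable ideal, and
`[x_1,…,x_n]^{f_{i+1}-f_i} I_{i+1} ⊆ I_i`. -/
def IsSqStableSubmodule (K : Type*) [Field K] {n r : ℕ}
    (I : Fin r → Ideal (MvPolynomial (Fin n) K)) (f : Fin r → ℕ) : Prop :=
  (∀ i, I i ≠ ⊤ ∧ IsSqStableIdeal K (I i)) ∧
  ∀ i : Fin r, ∀ h : i.1 + 1 < r,
    sqPow K n (f ⟨i.1 + 1, h⟩ - f i) * I ⟨i.1 + 1, h⟩ ≤ I i

/-- Squarefree lexicographic submodule (characterization of Proposition `lex`):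
each `I_i` a proper squarefree lexsegment ideal, and
`[x_1,…,x_n]^{indeg I_{i+1} + f_{i+1} - f_i} ⊆ I_i`. -/
def IsSqLexSubmodule (K : Type*) [Field K] {n r : ℕ}
    (I : Fin r → Ideal (MvPolynomial (Fin n) K)) (f : Fin r → ℕ) : Prop :=
  (∀ i, IsSqLexIdeal K (I i) ∧ I i ≠ ⊤) ∧
  ∀ i : Fin r, ∀ h : i.1 + 1 < r,
    sqPow K n (indeg K (I ⟨i.1 + 1, h⟩) + f ⟨i.1 + 1, h⟩ - f i) ≤ I i

end

/-- for a squarefree lexicographic submodule with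
`μ_i = max{deg(u e_i) : u e_i ∈ G(I_i e_i)}`, one has
`μ_i - f_i ≤ indeg I_{i+1} + f_{i+1} - f_i` and `μ_1 ≤ μ_2 ≤ ⋯ ≤ μ_r`. -/
theorem stmt_3 (K : Type*) [Field K] (n r : ℕ)
    (I : Fin r → Ideal (MvPolynomial (Fin n) K)) (f : Fin r → ℕ) (hf : Monotone f)
    (hL : IsSqLexSubmodule K I f)
    (μ : Fin r → ℕ)
    (hμ : ∀ i, IsGreatest {d : ℕ | ∃ A : Finset (Fin n),
      IsMinGen K (I i) A ∧ A.card + f i = d} (μ i)) :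
    (∀ i : Fin r, ∀ h : i.1 + 1 < r,
      μ i - f i ≤ indeg K (I ⟨i.1 + 1, h⟩) + f ⟨i.1 + 1, h⟩ - f i) ∧
    Monotone μ := by
  have key : ∀ i : Fin r, ∀ h : i.1 + 1 < r,
      μ i - f i ≤ indeg K (I ⟨i.1 + 1, h⟩) + f ⟨i.1 + 1, h⟩ - f i := by
    intro i h
    obtain ⟨⟨A, hA, hAd⟩, hub⟩ := hμ i
    have hfi : f i ≤ f ⟨i.1 + 1, h⟩ := hf (by simp [Fin.le_def])
    have hcard : μ i - f i = A.card := by omega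
    rw [hcard]
    by_contra hc
    push_neg at hc
    obtain ⟨B, hBA, hBcard⟩ := A.exists_subset_card_eq (le_of_lt hc)
    have hBI : sqMon K B ∈ I i := hL.2 i h (Ideal.subset_span ⟨B, hBcard, rfl⟩)
    exact hA.2 B (lt_of_le_of_ne hBA (by rintro rfl; omega)) hBI
  have step : ∀ i : Fin r, ∀ h : i.1 + 1 < r, μ i ≤ μ ⟨i.1 + 1, h⟩ := by
    intro i h
    obtain ⟨⟨A, hA, hAd⟩, _⟩ := hμ i
    obtain ⟨⟨A', hA', hAd'⟩, _⟩ := hμ ⟨i.1 + 1, h⟩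
    have h1 := key i h
    have hind : indeg K (I ⟨i.1 + 1, h⟩) ≤ A'.card := Nat.sInf_le ⟨A', rfl, hA'.1⟩
    have hfi : f i ≤ f ⟨i.1 + 1, h⟩ := hf (by simp [Fin.le_def])
    omega
  refine ⟨key, ?_⟩
  suffices H : ∀ b (hb : b < r) a (ha : a < r), a ≤ b → μ ⟨a, ha⟩ ≤ μ ⟨b, hb⟩ by
    intro x y hxy; exact H y.1 y.2 x.1 x.2 hxy
  intro b
  induction b with
  | zero =>
    intro hb a ha hab
    obtain rfl : a = 0 := by omega
    exact le_rfl
  | succ b ih =>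
    intro hb a ha hab
    rcases Nat.lt_or_ge a (b + 1) with h' | h'
    · exact le_trans (ih (by omega) a ha (by omega)) (step ⟨b, by omega⟩ hb)
    · obtain rfl : a = b + 1 := by omega
      exact le_rfl
end

section
/- Let M = ⊕_{i=1}^r I_i e_i ⊊ F be a squarefree stable submodule. If β_{i,i+j}(M) ≠ 0, then β_{k,k+j}(M) ≠ 0 for all k = 0,...,i. (All linear strands of the Betti table of a squarefree stable submodule begin in homological degree 0.) -/
open scoped Classical

/-- for a squarefree stable submodule, if `β_{i,i+j}(M) ≠ 0` then
`β_{k,k+j}(M) ≠ 0` for all `k = 0,…,i`. -/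
theorem stmt_6 (K : Type*) [Field K] (n r : ℕ)
    (I : Fin r → Ideal (MvPolynomial (Fin n) K)) (f : Fin r → ℕ) (hf : Monotone f)
    (hM : IsSqStableSubmodule K I f) (i j : ℕ) (h : betti K I f i j ≠ 0) :
    ∀ k ≤ i, betti K I f k j ≠ 0 := by
  intro k hk
  unfold betti at h ⊢
  -- extract a nonzero summand
  obtain ⟨i₀, -, hi₀⟩ := Finset.exists_ne_zero_of_sum_ne_zero h
  obtain ⟨A, hA, hAne⟩ := Finset.exists_ne_zero_of_sum_ne_zero hi₀
  have hle : i ≤ mIdx A - A.card := by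
    by_contra hlt
    exact hAne (Nat.choose_eq_zero_of_lt (Nat.lt_of_not_le hlt))
  have hpos : 0 < Nat.choose (mIdx A - A.card) k :=
    Nat.choose_pos (hk.trans hle)
  intro hzero
  have h1 : ∑ B ∈ mgens K (I i₀) (j - f i₀), Nat.choose (mIdx B - B.card) k = 0 := by
    have := Finset.sum_eq_zero_iff.mp hzero
    exact Finset.sum_eq_zero_iff.mp hzero i₀ (Finset.mem_univ i₀)
  have := Finset.sum_eq_zero_iff.mp h1 A hA
  omega
end

section
/- Let M = ⊕_{i=1}^r I_i e_i ⊊ F be a squarefree stable submodule. Then β_{k,k+ℓ}(M) is an extremal Betti number of M if and only if (1) β_{k,k+ℓ}(M) ≠ 0, (2) β_{k,k+j}(M) = 0 for all j > ℓ, and (3) β_{i,i+ℓ}(M) = 0 for all i > k. -/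
open scoped Classical

/-- `β_{k,k+ℓ}(M)` is extremal iff it is nonzero, `β_{k,k+j}(M) = 0` for
`j > ℓ`, and `β_{i,i+ℓ}(M) = 0` for `i > k`. -/
theorem stmt_7 (K : Type*) [Field K] (n r : ℕ)
    (I : Fin r → Ideal (MvPolynomial (Fin n) K)) (f : Fin r → ℕ) (hf : Monotone f)
    (hM : IsSqStableSubmodule K I f) (k ℓ : ℕ) :
    IsExtremal (betti K I f) k ℓ ↔
      (betti K I f k ℓ ≠ 0 ∧ (∀ j, ℓ < j → betti K I f k j = 0) ∧
        ∀ i, k < i → betti K I f i ℓ = 0) := by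
  constructor
  · rintro ⟨h0, h⟩
    refine ⟨h0, fun j hj => h k j le_rfl hj.le ?_, fun i hi => h i ℓ hi.le le_rfl ?_⟩
    · simp only [ne_eq, Prod.mk.injEq, not_and]; omega
    · simp only [ne_eq, Prod.mk.injEq, not_and]; omega
  · rintro ⟨h0, hj, hi⟩
    refine ⟨h0, fun i j hki hlj hne => ?_⟩
    rcases eq_or_lt_of_le hki with rfl | hki
    · rcases eq_or_lt_of_le hlj with rfl | hlj
      · exact absurd rfl hne
      · exact hj j hlj
    rcases eq_or_lt_of_le hlj with rfl | hlj
    · exact hi i hki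
    -- corner case: i > k, j > ℓ; use betti k j = 0
    have hkj : betti K I f k j = 0 := hj j hlj
    unfold betti at hkj ⊢
    rw [Finset.sum_eq_zero_iff] at hkj
    refine Finset.sum_eq_zero fun a _ => Finset.sum_eq_zero fun A hA => ?_
    have := (Finset.sum_eq_zero_iff.mp (hkj a (Finset.mem_univ a))) A hA
    have hlt : mIdx A - A.card < k := by
      by_contra hc
      have := Nat.choose_pos (Nat.le_of_not_lt hc)
      omega
    exact Nat.choose_eq_zero_of_lt (lt_trans hlt hki)
end

section
/- Let M = ⊕_{i=1}^r I_i e_i ⊊ F be a squarefree stable submodule. Then β_{k,k+ℓ}(M) is an extremal Betti number if and only if k + ℓ = max{m(u) + f_i : u e_i ∈ G(M)_ℓ, i = 1,...,r} and m(u) + f_i < k + j for all j > ℓ and all u e_i ∈ G(M)_j. -/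
open scoped Classical

lemma aux_card_le_mIdx {n : ℕ} (A : Finset (Fin n)) : A.card ≤ mIdx A := by
  classical
  have h1 : A.card = (A.image Fin.val).card :=
    (Finset.card_image_of_injective A Fin.val_injective).symm
  rw [mIdx, h1]
  calc (A.image Fin.val).card ≤ (Finset.range (A.sup fun i => i.1 + 1)).card := by
        apply Finset.card_le_card
        intro x hx
        simp only [Finset.mem_image] at hx
        obtain ⟨a, ha, rfl⟩ := hx
        simp only [Finset.mem_range]
        exact Nat.lt_of_lt_of_le (Nat.lt_succ_self _) (Finset.le_sup (f := fun i : Fin n => i.1 + 1) ha)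
    _ = _ := Finset.card_range _

lemma aux_not_minGen_empty (K : Type*) [Field K] {n : ℕ}
    {I : Ideal (MvPolynomial (Fin n) K)} (hI : I ≠ ⊤) :
    ¬ IsMinGen K I (∅ : Finset (Fin n)) := by
  intro h
  have h1 : (1 : MvPolynomial (Fin n) K) ∈ I := by
    simpa [sqMon] using h.1
  exact hI ((Ideal.eq_top_iff_one I).mpr h1)

lemma aux_betti_ne_zero_iff (K : Type*) [Field K] {n r : ℕ}
    (I : Fin r → Ideal (MvPolynomial (Fin n) K)) (f : Fin r → ℕ)
    (hI : ∀ i, I i ≠ ⊤) (k j : ℕ) :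
    betti K I f k j ≠ 0 ↔ ∃ (i : Fin r) (A : Finset (Fin n)),
      IsMinGen K (I i) A ∧ A.card + f i = j ∧ k + j ≤ mIdx A + f i := by
  constructor
  · intro h
    obtain ⟨i, -, hi⟩ := Finset.exists_ne_zero_of_sum_ne_zero h
    obtain ⟨A, hA, hne⟩ := Finset.exists_ne_zero_of_sum_ne_zero hi
    simp only [mgens, Finset.mem_filter, Finset.mem_univ, true_and] at hA
    obtain ⟨hmin, hcard⟩ := hA
    have hA0 : A ≠ ∅ := by
      intro h0; exact aux_not_minGen_empty K (hI i) (h0 ▸ hmin)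
    have hpos : 0 < A.card := Finset.card_pos.mpr (Finset.nonempty_iff_ne_empty.mpr hA0)
    have hk : k ≤ mIdx A - A.card := by
      by_contra hk
      exact hne (Nat.choose_eq_zero_of_lt (Nat.lt_of_not_le hk))
    have hle := aux_card_le_mIdx A
    exact ⟨i, A, hmin, by omega, by omega⟩
  · rintro ⟨i, A, hmin, hd, hv⟩
    have hle := aux_card_le_mIdx A
    have hA : A ∈ mgens K (I i) (j - f i) := by
      simp only [mgens, Finset.mem_filter, Finset.mem_univ, true_and]
      exact ⟨hmin, by omega⟩
    have h1 : Nat.choose (mIdx A - A.card) k ≠ 0 :=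
      (Nat.choose_pos (by omega)).ne'
    have h2 : Nat.choose (mIdx A - A.card) k ≤
        ∑ A ∈ mgens K (I i) (j - f i), Nat.choose (mIdx A - A.card) k :=
      Finset.single_le_sum (f := fun A => Nat.choose (mIdx A - A.card) k) (fun _ _ => Nat.zero_le _) hA
    have h3 : (∑ A ∈ mgens K (I i) (j - f i), Nat.choose (mIdx A - A.card) k) ≤
        betti K I f k j :=
      Finset.single_le_sum (f := fun i => ∑ A ∈ mgens K (I i) (j - f i),
        Nat.choose (mIdx A - A.card) k) (fun _ _ => Nat.zero_le _) (Finset.mem_univ i)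
    omega

/-- `β_{k,k+ℓ}(M)` is extremal iff
`k + ℓ = max{m(u) + f_i : u e_i ∈ G(M)_ℓ}` and `m(u) + f_i < k + j` for all `j > ℓ` and
all `u e_i ∈ G(M)_j`. -/
theorem stmt_8 (K : Type*) [Field K] (n r : ℕ)
    (I : Fin r → Ideal (MvPolynomial (Fin n) K)) (f : Fin r → ℕ) (hf : Monotone f)
    (hM : IsSqStableSubmodule K I f) (k ℓ : ℕ) :
    IsExtremal (betti K I f) k ℓ ↔
      (IsGreatest {v : ℕ | ∃ (i : Fin r) (A : Finset (Fin n)),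
          IsMinGen K (I i) A ∧ A.card + f i = ℓ ∧ v = mIdx A + f i} (k + ℓ) ∧
       ∀ j : ℕ, ℓ < j → ∀ (i : Fin r) (A : Finset (Fin n)),
          IsMinGen K (I i) A → A.card + f i = j → mIdx A + f i < k + j) := by
  have hI : ∀ i, I i ≠ ⊤ := fun i => (hM.1 i).1
  have hchar := aux_betti_ne_zero_iff K I f hI
  constructor
  · rintro ⟨h0, hvan⟩
    obtain ⟨i, A, hmin, hd, hv⟩ := (hchar k ℓ).mp h0
    have hub : ∀ v ∈ {v : ℕ | ∃ (i : Fin r) (A : Finset (Fin n)),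
        IsMinGen K (I i) A ∧ A.card + f i = ℓ ∧ v = mIdx A + f i}, v ≤ k + ℓ := by
      rintro v ⟨i', A', hmin', hd', rfl⟩
      by_contra hgt
      have hgt' : k + ℓ < mIdx A' + f i' := Nat.lt_of_not_le hgt
      have hP : betti K I f (mIdx A' + f i' - ℓ) ℓ ≠ 0 :=
        (hchar _ ℓ).mpr ⟨i', A', hmin', hd', by omega⟩
      exact hP (hvan _ ℓ (by omega) le_rfl (by
        simp only [ne_eq, Prod.mk.injEq, not_and]; omega))
    have hveq : mIdx A + f i = k + ℓ := by
      have := hub (mIdx A + f i) ⟨i, A, hmin, hd, rfl⟩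
      omega
    refine ⟨⟨⟨i, A, hmin, hd, hveq.symm⟩, fun v hv => hub v hv⟩, ?_⟩
    intro j hj i' A' hmin' hd'
    by_contra hge
    have hge' : k + j ≤ mIdx A' + f i' := Nat.le_of_not_lt hge
    have hP : betti K I f (mIdx A' + f i' - j) j ≠ 0 :=
      (hchar _ j).mpr ⟨i', A', hmin', hd', by omega⟩
    exact hP (hvan _ j (by omega) (by omega) (by
      simp only [ne_eq, Prod.mk.injEq, not_and]; omega))
  · rintro ⟨⟨⟨i, A, hmin, hd, hveq⟩, hub⟩, hb⟩
    constructor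
    · exact (hchar k ℓ).mpr ⟨i, A, hmin, hd, by omega⟩
    · intro i' j hki hlj hne
      by_contra hnz
      obtain ⟨i₀, A₀, hmin₀, hd₀, hv₀⟩ := (hchar i' j).mp hnz
      rcases Nat.lt_or_ge ℓ j with hlt | hge
      · have := hb j hlt i₀ A₀ hmin₀ hd₀
        omega
      · have hjl : j = ℓ := le_antisymm hge hlj
        subst hjl
        have := hub ⟨i₀, A₀, hmin₀, hd₀, rfl⟩
        have hne' : i' ≠ k := fun h => hne (by rw [h])
        omega
end

section
/- Let M ⊊ S^r be a squarefree stable submodule generated in a single degree d, and let m = max{m(u) : u e_i ∈ G(M)}. Then M has a unique extremal Betti number, namely β_{m-d, m}(M). -/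
open scoped Classical

/-- a squarefree stable submodule `M ⊊ S^r` generated in a single degree
`d` has a unique extremal Betti number, namely `β_{m-d,m}(M)` with
`m = max{m(u) : u e_i ∈ G(M)}`. -/
theorem stmt_14 (K : Type*) [Field K] (n r : ℕ)
    (I : Fin r → Ideal (MvPolynomial (Fin n) K))
    (hM : IsSqStableSubmodule K I (fun _ => 0)) (d m : ℕ)
    (hgen : ∀ (i : Fin r) (A : Finset (Fin n)), IsMinGen K (I i) A → A.card = d)
    (hm : IsGreatest {v : ℕ | ∃ (i : Fin r) (A : Finset (Fin n)),
      IsMinGen K (I i) A ∧ v = mIdx A} m) :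
    IsExtremal (betti K I (fun _ => 0)) (m - d) d ∧
      ∀ k j : ℕ, IsExtremal (betti K I (fun _ => 0)) k j → (k, j) = (m - d, d) := by
  classical
  have hub : ∀ (i : Fin r) (A : Finset (Fin n)), IsMinGen K (I i) A → mIdx A ≤ m :=
    fun i A h => hm.2 ⟨i, A, h, rfl⟩
  -- betti vanishes for j ≠ d
  have hzero : ∀ k j, j ≠ d → betti K I (fun _ => 0) k j = 0 := by
    intro k j hj
    refine Finset.sum_eq_zero fun i _ => Finset.sum_eq_zero fun A hA => ?_
    simp only [mgens, Finset.mem_filter, Finset.mem_univ, true_and, Nat.sub_zero] at hA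
    exact absurd ((hgen i A hA.1).symm.trans hA.2).symm hj
  -- betti vanishes in degree d for k > m - d
  have hkzero : ∀ k, m - d < k → betti K I (fun _ => 0) k d = 0 := by
    intro k hk
    refine Finset.sum_eq_zero fun i _ => Finset.sum_eq_zero fun A hA => ?_
    simp only [mgens, Finset.mem_filter, Finset.mem_univ, true_and, Nat.sub_zero] at hA
    have h1 : mIdx A ≤ m := hub i A hA.1
    exact Nat.choose_eq_zero_of_lt (by omega)
  -- betti (m-d) d ≠ 0
  have hne : betti K I (fun _ => 0) (m - d) d ≠ 0 := by
    obtain ⟨i, A, hA, hmA⟩ := hm.1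
    have hc : A.card = d := hgen i A hA
    have hmem : A ∈ mgens K (I i) d := by
      simp [mgens, hA, hc]
    have h1 : (1 : ℕ) ≤ ∑ B ∈ mgens K (I i) d,
        Nat.choose (mIdx B - B.card) (m - d) := by
      have := Finset.single_le_sum
        (f := fun B => Nat.choose (mIdx B - B.card) (m - d))
        (fun _ _ => Nat.zero_le _) hmem
      simpa [hc, ← hmA, Nat.choose_self] using this
    have h2 : (1 : ℕ) ≤ betti K I (fun _ => 0) (m - d) d := by
      refine le_trans h1 ?_
      exact Finset.single_le_sum
        (f := fun i => ∑ B ∈ mgens K (I i) d, Nat.choose (mIdx B - B.card) (m - d))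
        (fun _ _ => Nat.zero_le _) (Finset.mem_univ i)
    omega
  refine ⟨⟨hne, ?_⟩, ?_⟩
  · intro i j hi hj hij
    rcases eq_or_ne j d with hjd | hjd
    · have hne' : i ≠ m - d := fun h => hij (by rw [hjd, h])
      rw [hjd]
      exact hkzero i (by omega)
    · exact hzero i j hjd
  · intro k j hext
    have hjd : d = j := by
      by_contra hj
      exact hext.1 (hzero k j (Ne.symm hj))
    subst hjd
    have hk : k ≤ m - d := by
      by_contra h
      push_neg at h
      exact hext.1 (hkzero k h)
    rcases eq_or_lt_of_le hk with h | h
    · simp [h]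
    · exact absurd (hext.2 (m - d) d h.le le_rfl
        (by simp [Prod.ext_iff]; omega)) hne
end

section
/- Let n ≥ 3 and let X be a non-empty subset of {0,1,...,n-1}. For every integer r ≥ |X| there exists a squarefree lexicographic submodule L ⊊ S^r (all basis degrees 0) such that supp(b(L)) = X, where b(L) = (b_0,...,b_{n-1}) with b_i = |{u e_j ∈ G(L)_{n-i} : m(u) = n}|. -/
open scoped Classical

noncomputable section auxproof

open MvPolynomial

variable {K : Type*} [Field K] {n : ℕ}

/-- The exponent finsupp of the squarefree monomial with support `A`. -/
def muF {n : ℕ} (A : Finset (Fin n)) : Fin n →₀ ℕ := ∑ i ∈ A, Finsupp.single i 1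

lemma muF_apply (A : Finset (Fin n)) (k : Fin n) : muF A k = if k ∈ A then 1 else 0 := by
  classical
  rw [muF, Finset.sum_apply']
  simp only [Finsupp.single_apply]
  exact Finset.sum_ite_eq' A k (fun _ => 1)

lemma muF_le_iff (B A : Finset (Fin n)) : muF B ≤ muF A ↔ B ⊆ A := by
  constructor
  · intro h k hk
    have := (Finsupp.le_def.mp h) k
    rw [muF_apply, muF_apply, if_pos hk] at this
    by_contra hkA
    rw [if_neg hkA] at this
    omega
  · intro h
    rw [Finsupp.le_def]
    intro k
    rw [muF_apply, muF_apply]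
    by_cases hk : k ∈ B
    · rw [if_pos hk, if_pos (h hk)]
    · rw [if_neg hk]; exact Nat.zero_le _

lemma sqMon_eq_monomial (A : Finset (Fin n)) :
    sqMon K A = monomial (muF A) (1 : K) := by
  classical
  induction A using Finset.induction_on with
  | empty => simp [sqMon, muF, monomial_zero']
  | insert _ _ h ih =>
    rename_i a A
    rw [sqMon, Finset.prod_insert h, ← sqMon, ih]
    rw [show (X a : MvPolynomial (Fin n) K) = monomial (Finsupp.single a 1) 1 by
      rw [← X_pow_eq_monomial, pow_one]]
    have hins : muF (insert a A) = Finsupp.single a 1 + muF A := by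
      rw [muF, muF, Finset.sum_insert h]
    rw [monomial_mul, one_mul, hins]

lemma mem_sqPow_iff (A : Finset (Fin n)) (d : ℕ) :
    sqMon K A ∈ sqPow K n d ↔ d ≤ A.card := by
  classical
  have hset : {p : MvPolynomial (Fin n) K | ∃ B : Finset (Fin n), B.card = d ∧ p = sqMon K B}
      = (fun s => monomial s (1 : K)) '' {m | ∃ B : Finset (Fin n), B.card = d ∧ m = muF B} := by
    ext p
    constructor
    · rintro ⟨B, hB, rfl⟩
      exact ⟨muF B, ⟨B, hB, rfl⟩, (sqMon_eq_monomial B).symm⟩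
    · rintro ⟨m, ⟨B, hB, rfl⟩, rfl⟩
      exact ⟨B, hB, (sqMon_eq_monomial B).symm⟩
  rw [sqPow, hset, mem_ideal_span_monomial_image, sqMon_eq_monomial,
    support_monomial, if_neg (one_ne_zero)]
  simp only [Finset.mem_singleton, forall_eq]
  constructor
  · rintro ⟨m, ⟨B, hB, rfl⟩, hle⟩
    have hBA : B ⊆ A := (muF_le_iff B A).mp hle
    calc d = B.card := hB.symm
    _ ≤ A.card := Finset.card_le_card hBA
  · intro hd
    obtain ⟨B, hBA, hB⟩ := Finset.exists_subset_card_eq hd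
    exact ⟨muF B, ⟨B, hB, rfl⟩, (muF_le_iff B A).mpr hBA⟩

lemma isMinGen_sqPow_iff (A : Finset (Fin n)) (d : ℕ) :
    IsMinGen K (sqPow K n d) A ↔ A.card = d := by
  constructor
  · rintro ⟨hmem, hmin⟩
    have h1 : d ≤ A.card := (mem_sqPow_iff A d).mp hmem
    by_contra hne
    have h2 : d < A.card := lt_of_le_of_ne h1 (Ne.symm hne)
    obtain ⟨B, hBA, hB⟩ := Finset.exists_subset_card_eq h1
    have hss : B ⊂ A := hBA.ssubset_of_ne (by rintro rfl; omega)
    exact hmin B hss ((mem_sqPow_iff B d).mpr hB.ge)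
  · rintro rfl
    refine ⟨(mem_sqPow_iff A A.card).mpr le_rfl, fun B hB => ?_⟩
    rw [mem_sqPow_iff]
    exact not_le.mpr (Finset.card_lt_card hB)

lemma sqPow_ne_top (d : ℕ) (hd : 1 ≤ d) : sqPow K n d ≠ ⊤ := by
  intro h
  have : sqMon K (∅ : Finset (Fin n)) ∈ sqPow K n d := by rw [h]; trivial
  rw [mem_sqPow_iff] at this
  simp only [Finset.card_empty, Nat.le_zero] at this
  omega

lemma isSqLexIdeal_sqPow (d : ℕ) : IsSqLexIdeal K (sqPow K n d) := by
  constructor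
  · refine ⟨{A | A.card = d}, ?_⟩
    rw [sqPow]
    congr 1
    ext p
    constructor
    · rintro ⟨B, hB, rfl⟩; exact ⟨B, hB, rfl⟩
    · rintro ⟨B, hB, rfl⟩; exact ⟨B, hB, rfl⟩
  · intro A B hcard hA _
    rw [mem_sqPow_iff] at hA ⊢
    omega

lemma indeg_sqPow (d : ℕ) (hd : d ≤ n) : indeg K (sqPow K n d) = d := by
  have hmem : d ∈ {d' : ℕ | ∃ A : Finset (Fin n), A.card = d' ∧ sqMon K A ∈ sqPow K n d} := by
    obtain ⟨B, _, hB⟩ := Finset.exists_subset_card_eq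
      (show d ≤ (Finset.univ : Finset (Fin n)).card by simpa using hd)
    exact ⟨B, hB, (mem_sqPow_iff B d).mpr hB.ge⟩
  refine le_antisymm (Nat.sInf_le hmem) (le_csInf ⟨d, hmem⟩ ?_)
  rintro b ⟨A, hA, hmem'⟩
  rw [mem_sqPow_iff] at hmem'
  omega

lemma sqPow_mono {d d' : ℕ} (h : d ≤ d') : sqPow K n d' ≤ sqPow K n d := by
  rw [sqPow, Ideal.span_le]
  rintro p ⟨A, hA, rfl⟩
  exact (mem_sqPow_iff A d).mpr (by omega)

end auxproof

/-- for `n ≥ 3`, any nonempty `X ⊆ {0,…,n-1}` and any `r ≥ |X|`, there is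
a squarefree lexicographic submodule `L ⊊ S^r` with `supp(b(L)) = X`, where
`b_i = |{u e_j ∈ G(L)_{n-i} : m(u) = n}|`. -/
theorem stmt_15 (K : Type*) [Field K] (n : ℕ) (hn : 3 ≤ n)
    (X : Finset ℕ) (hX : X.Nonempty) (hXsub : X ⊆ Finset.range n)
    (r : ℕ) (hr : X.card ≤ r) :
    ∃ I : Fin r → Ideal (MvPolynomial (Fin n) K),
      IsSqLexSubmodule K I (fun _ => 0) ∧
      ∀ i ∈ Finset.range n,
        (Set.ncard {p : Fin r × Finset (Fin n) |
          IsMinGen K (I p.1) p.2 ∧ p.2.card + i = n ∧ mIdx p.2 = n} ≠ 0 ↔ i ∈ X) := by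
  classical
  set l := X.sort (· ≤ ·) with hl
  have hlen : l.length = X.card := Finset.length_sort _
  have hlenpos : 0 < l.length := by rw [hlen]; exact hX.card_pos
  have hlenr : l.length ≤ r := by omega
  set xf : Fin r → ℕ := fun i => l.get ⟨l.length - 1 - i.1, by omega⟩ with hxf
  have hxfX : ∀ i, xf i ∈ X := by
    intro i
    have : xf i ∈ l := List.get_mem l _
    rwa [hl, Finset.mem_sort] at this
  have hxflt : ∀ i, xf i < n := fun i => Finset.mem_range.mp (hXsub (hxfX i))
  have hmono : ∀ i j : Fin r, i.1 ≤ j.1 → xf j ≤ xf i := by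
    intro i j hij
    have hs : List.Pairwise (· ≤ ·) l := Finset.pairwise_sort _ _
    exact hs.rel_get_of_le (Fin.mk_le_mk.mpr (by omega))
  have hsurj : ∀ x ∈ X, ∃ i : Fin r, xf i = x := by
    intro x hx
    have hxl : x ∈ l := by rwa [hl, Finset.mem_sort]
    obtain ⟨k, hk⟩ := List.mem_iff_get.mp hxl
    refine ⟨⟨l.length - 1 - k.1, by omega⟩, ?_⟩
    have hkey : l.length - 1 - (l.length - 1 - k.1) = k.1 := by
      have := k.isLt; omega
    simp only [hxf]
    rw [show (⟨l.length - 1 - (l.length - 1 - k.1), by omega⟩ : Fin l.length) = k from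
      Fin.ext hkey, hk]
  refine ⟨fun i => sqPow K n (n - xf i), ⟨fun i => ⟨isSqLexIdeal_sqPow _,
    sqPow_ne_top _ (by have := hxflt i; omega)⟩, ?_⟩, ?_⟩
  · intro i h
    have hle : xf ⟨i.1 + 1, h⟩ ≤ xf i := hmono i ⟨i.1 + 1, h⟩ (by simp)
    have h1 : n - xf ⟨i.1 + 1, h⟩ ≤ n := by omega
    rw [indeg_sqPow _ h1]
    simp only [Nat.add_zero, Nat.sub_zero]
    exact sqPow_mono (by omega)
  · intro i hi
    rw [Finset.mem_range] at hi
    constructor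
    · intro hne
      obtain ⟨p, hmg, hcard, _⟩ := Set.nonempty_of_ncard_ne_zero hne
      have hc : p.2.card = n - xf p.1 := (isMinGen_sqPow_iff p.2 _).mp hmg
      have hx := hxflt p.1
      have : i = xf p.1 := by omega
      rw [this]; exact hxfX p.1
    · intro hiX
      obtain ⟨j, hj⟩ := hsurj i hiX
      set A : Finset (Fin n) := Finset.Ici (⟨i, hi⟩ : Fin n) with hA
      have hAcard : A.card = n - i := Fin.card_Ici _
      have htop : (⟨n - 1, by omega⟩ : Fin n) ∈ A := by
        rw [hA, Finset.mem_Ici]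
        exact Fin.mk_le_mk.mpr (by omega)
      have hmIdx : mIdx A = n := by
        refine le_antisymm (Finset.sup_le fun k _ => k.isLt) ?_
        have := Finset.le_sup (f := fun k : Fin n => k.1 + 1) htop
        simpa [mIdx, Nat.sub_add_cancel (by omega : 1 ≤ n)] using this
      have hne : {p : Fin r × Finset (Fin n) |
          IsMinGen K (sqPow K n (n - xf p.1)) p.2 ∧ p.2.card + i = n ∧ mIdx p.2 = n}.Nonempty := by
        refine ⟨(j, A), ?_, ?_, hmIdx⟩
        · exact (isMinGen_sqPow_iff A _).mpr (by rw [hAcard, hj])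
        · simp only [hAcard]; omega
      exact ((Set.ncard_pos (Set.toFinite _)).mpr hne).ne'
end
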